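/- The kernel of the adjoint representation, {T ∈ 𝒢^× : T U T^{-1} = U for all U ∈ 𝒢}, is equal to (Λ_r^{(0)} + 𝒢^n)^× if n is odd, and is equal to Λ_r^{(0)×} if n is even. -/

import Mathlib

open Pointwise

noncomputable section

namespace ClGA

variable (𝔽 : Type*) [RCLike 𝔽] (p q r : ℕ)

/-- The diagonal weights: `p` ones, `q` minus-ones, `r` zeros. -/
def w : Fin (p + q + r) → 𝔽 := fun i =>
  if (i : ℕ) < p then 1 else if (i : ℕ) < p + q then -1 else 0

/-- The quadratic form on `𝔽^n` whose Gram matrix is `diag(1,…,1,−1,…,−1,0,…,0)`. -/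
def Q : QuadraticForm 𝔽 (Fin (p + q + r) → 𝔽) :=
  QuadraticMap.weightedSumSquares 𝔽 (w 𝔽 p q r)

/-- The degenerate Clifford geometric algebra `𝒢 = 𝒢_{p,q,r}`. -/
abbrev G := CliffordAlgebra (Q 𝔽 p q r)

/-- The generators `e_a`, `a = 1, …, n`. -/
def e (a : Fin (p + q + r)) : G 𝔽 p q r :=
  CliffordAlgebra.ι (Q 𝔽 p q r) (Pi.single a 1)

/-- The even subspace `𝒢^{(0)}`: the `+1`-eigenspace of the grade involution. -/
def Geven : Submodule 𝔽 (G 𝔽 p q r) where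
  carrier := {x | CliffordAlgebra.involute x = x}
  add_mem' := by
    intro a b ha hb
    simp only [Set.mem_setOf_eq, map_add] at ha hb ⊢
    rw [ha, hb]
  zero_mem' := by simp
  smul_mem' := by
    intro c x hx
    simp only [Set.mem_setOf_eq, map_smul] at hx ⊢
    rw [hx]

/-- The odd subspace `𝒢^{(1)}`: the `−1`-eigenspace of the grade involution. -/
def Godd : Submodule 𝔽 (G 𝔽 p q r) where
  carrier := {x | CliffordAlgebra.involute x = -x}
  add_mem' := by
    intro a b ha hb
    simp only [Set.mem_setOf_eq, map_add] at ha hb ⊢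
    rw [ha, hb, neg_add]
  zero_mem' := by simp
  smul_mem' := by
    intro c x hx
    simp only [Set.mem_setOf_eq, map_smul] at hx ⊢
    rw [hx, smul_neg]

/-- The grade-1 subspace `𝒢^1`, the span of the generators. -/
def G1 : Submodule 𝔽 (G 𝔽 p q r) := Submodule.span 𝔽 (Set.range (e 𝔽 p q r))

/-- The scalar (grade-0) subspace `𝒢^0 = 𝔽·1`. -/
def G0 : Submodule 𝔽 (G 𝔽 p q r) := Submodule.span 𝔽 {(1 : G 𝔽 p q r)}

/-- The element `e_{1…n} = e_1 e_2 ⋯ e_n`. -/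
def eTop : G 𝔽 p q r := (List.ofFn (e 𝔽 p q r)).prod

/-- The grade-`n` subspace `𝒢^n = 𝔽·e_{1…n}`. -/
def Gn : Submodule 𝔽 (G 𝔽 p q r) := Submodule.span 𝔽 {eTop 𝔽 p q r}

/-- The Grassmann subalgebra `Λ_r` generated by the null generators. -/
def Λr : Subalgebra 𝔽 (G 𝔽 p q r) :=
  Algebra.adjoin 𝔽 {x | ∃ a : Fin (p + q + r), p + q ≤ (a : ℕ) ∧ x = e 𝔽 p q r a}

/-- `Λ_r` viewed as a subspace of `𝒢`. -/
def Λrs : Submodule 𝔽 (G 𝔽 p q r) := Subalgebra.toSubmodule (Λr 𝔽 p q r)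

/-- The even part `Λ_r^{(0)} = Λ_r ∩ 𝒢^{(0)}`. -/
def Λr0 : Submodule 𝔽 (G 𝔽 p q r) := Λrs 𝔽 p q r ⊓ Geven 𝔽 p q r

/-- The Jacobson radical `rad 𝒢` of `𝒢`: the two-sided ideal generated by the
null generators. -/
def radG : Submodule 𝔽 (G 𝔽 p q r) :=
  Submodule.span 𝔽 {x | ∃ (u v : G 𝔽 p q r) (a : Fin (p + q + r)),
    p + q ≤ (a : ℕ) ∧ x = u * e 𝔽 p q r a * v}

/-- `rad 𝒢^{(0)} = rad 𝒢 ∩ 𝒢^{(0)}`. -/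
def radG0 : Submodule 𝔽 (G 𝔽 p q r) := radG 𝔽 p q r ⊓ Geven 𝔽 p q r

/-- For a subset `S ⊆ 𝒢`, `S^×` denotes those elements of `S` invertible in `𝒢`. -/
def ux (S : Set (G 𝔽 p q r)) : Set (G 𝔽 p q r) := {x ∈ S | IsUnit x}

/-- `𝒢^{(0)×} ∪ 𝒢^{(1)×}` (the group `P^±_{p,q,r}`). -/
def Epm : Set (G 𝔽 p q r) :=
  ux 𝔽 p q r ↑(Geven 𝔽 p q r) ∪ ux 𝔽 p q r ↑(Godd 𝔽 p q r)

/-- `(T⁻¹)^̂ · T`, the grade involution of the inverse times `T`. -/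
def tw (T : G 𝔽 p q r) : G 𝔽 p q r :=
  CliffordAlgebra.involute (Ring.inverse T) * T

/-- The invertible elements `T` with `T W T⁻¹ ⊆ W` (adjoint representation). -/
def gammaAd (W : Submodule 𝔽 (G 𝔽 p q r)) : Set (G 𝔽 p q r) :=
  {T | IsUnit T ∧ ∀ U ∈ W, T * U * Ring.inverse T ∈ W}

/-- The invertible elements `T` with `T̂ W T⁻¹ ⊆ W` (twisted adjoint representation). -/
def gammaTw (W : Submodule 𝔽 (G 𝔽 p q r)) : Set (G 𝔽 p q r) :=
  {T | IsUnit T ∧ ∀ U ∈ W, CliffordAlgebra.involute T * U * Ring.inverse T ∈ W}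


section Aux
open CliffordAlgebra Finset

variable {𝔽 : Type*} [RCLike 𝔽] {p q r : ℕ}

theorem Q_apply (v : Fin (p+q+r) → 𝔽) :
    Q 𝔽 p q r v = ∑ i, w 𝔽 p q r i * (v i * v i) := by
  simp [Q, QuadraticMap.weightedSumSquares_apply, smul_eq_mul]

theorem Q_single (a : Fin (p+q+r)) : Q 𝔽 p q r (Pi.single a 1) = w 𝔽 p q r a := by
  rw [Q_apply]
  rw [Finset.sum_eq_single a]
  · simp
  · intro b _ hb; simp [Pi.single_apply, hb]
  · simp

theorem e_sq (a : Fin (p+q+r)) :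
    e 𝔽 p q r a * e 𝔽 p q r a = algebraMap 𝔽 _ (w 𝔽 p q r a) := by
  rw [e, CliffordAlgebra.ι_sq_scalar, Q_single]

theorem e_mul_e_of_ne {a b : Fin (p+q+r)} (h : a ≠ b) :
    e 𝔽 p q r a * e 𝔽 p q r b = -(e 𝔽 p q r b * e 𝔽 p q r a) := by
  apply CliffordAlgebra.ι_mul_ι_comm_of_isOrtho
  show Q 𝔽 p q r _ = Q 𝔽 p q r _ + Q 𝔽 p q r _
  simp only [Q_apply, ← Finset.sum_add_distrib]
  apply Finset.sum_congr rfl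
  intro i _
  simp only [Pi.add_apply, Pi.single_apply]
  rcases eq_or_ne i a with rfl | ha
  · simp [h]
  · rcases eq_or_ne i b with rfl | hb
    · simp [ha]
    · simp [ha, hb]

/-- The basis monomial indexed by a finite set of generator indices. -/
def mon (S : Finset (Fin (p+q+r))) : G 𝔽 p q r :=
  ((S.sort (· ≤ ·)).map (e 𝔽 p q r)).prod

/-- The sign `(-1)^{#{b ∈ S | b < a}}`. -/
def sgn (a : Fin (p+q+r)) (S : Finset (Fin (p+q+r))) : 𝔽 :=
  (-1) ^ (S.filter (· < a)).card

@[simp] theorem mon_empty : (mon ∅ : G 𝔽 p q r) = 1 := by simp [mon]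

@[simp] theorem mon_singleton (a : Fin (p+q+r)) : (mon {a} : G 𝔽 p q r) = e 𝔽 p q r a := by
  simp [mon]

theorem mon_insert_min {a : Fin (p+q+r)} {S : Finset (Fin (p+q+r))}
    (h : ∀ b ∈ S, a < b) (ha : a ∉ S) :
    (mon (insert a S) : G 𝔽 p q r) = e 𝔽 p q r a * mon S := by
  rw [mon, Finset.sort_insert (· ≤ ·) (fun b hb => (h b hb).le) ha]
  simp [mon]

end Aux
section Aux2
open CliffordAlgebra Finset

variable {𝔽 : Type*} [RCLike 𝔽] {p q r : ℕ}

theorem sgn_mul_self (a : Fin (p+q+r)) (S : Finset (Fin (p+q+r))) :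
    (sgn a S : 𝔽) * sgn a S = 1 := by
  rw [sgn, ← pow_add, ← two_mul, pow_mul]
  simp

theorem sgn_eq_one {a : Fin (p+q+r)} {S : Finset (Fin (p+q+r))}
    (h : ∀ b ∈ S, ¬ b < a) : (sgn a S : 𝔽) = 1 := by
  rw [sgn, Finset.filter_eq_empty_iff.mpr h]
  simp

theorem sgn_erase (a : Fin (p+q+r)) (S : Finset (Fin (p+q+r))) :
    (sgn a (S.erase a) : 𝔽) = sgn a S := by
  rw [sgn, sgn, Finset.filter_erase, Finset.erase_eq_of_notMem]
  simp

theorem sgn_insert {a b : Fin (p+q+r)} {S : Finset (Fin (p+q+r))}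
    (hb : b ∉ S) :
    (sgn a (insert b S) : 𝔽) = (if b < a then -1 else 1) * sgn a S := by
  rw [sgn, sgn, Finset.filter_insert]
  split
  · rw [Finset.card_insert_of_notMem (fun h => hb (Finset.mem_filter.mp h).1), pow_succ]
    ring
  · rw [one_mul]

theorem e_mul_mon (a : Fin (p+q+r)) (S : Finset (Fin (p+q+r))) :
    e 𝔽 p q r a * mon S =
      if a ∈ S then (sgn a S * w 𝔽 p q r a) • mon (S.erase a)
      else (sgn a S : 𝔽) • mon (insert a S) := by
  induction S using Finset.induction_on_min with
  | empty =>
      simp only [Finset.notMem_empty, if_neg, if_false, mon_empty, mul_one, insert_empty_eq,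
        mon_singleton]
      rw [sgn_eq_one (by simp), one_smul]
  | insert m S' hm ih =>
      have hmS' : m ∉ S' := fun h => lt_irrefl m (hm m h)
      have hmon : mon (insert m S') = e 𝔽 p q r m * mon S' := mon_insert_min hm hmS'
      rcases lt_trichotomy a m with hlt | rfl | hgt
      · have haS : a ∉ insert m S' := by
          intro h
          rcases Finset.mem_insert.mp h with rfl | h
          · exact lt_irrefl a hlt
          · exact lt_asymm hlt (hm a h)
        rw [if_neg haS, sgn_eq_one (fun b hb => by
          rcases Finset.mem_insert.mp hb with rfl | hb
          · exact not_lt.mpr hlt.le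
          · exact not_lt.mpr (hlt.trans (hm b hb)).le), one_smul]
        exact (mon_insert_min (fun b hb => by
          rcases Finset.mem_insert.mp hb with rfl | hb
          · exact hlt
          · exact hlt.trans (hm b hb)) haS).symm
      · rw [if_pos (Finset.mem_insert_self a S'), hmon, ← mul_assoc, e_sq,
          Finset.erase_insert hmS',
          sgn_eq_one (fun b hb => by
            rcases Finset.mem_insert.mp hb with rfl | hb
            · exact lt_irrefl b
            · exact not_lt.mpr (hm b hb).le), one_mul,
          Algebra.smul_def]
      · have ham : a ≠ m := ne_of_gt hgt
        have hswap : e 𝔽 p q r a * mon (insert m S') =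
            -(e 𝔽 p q r m * (e 𝔽 p q r a * mon S')) := by
          rw [hmon, ← mul_assoc, e_mul_e_of_ne ham, neg_mul, mul_assoc]
        have hsgn : (sgn a (insert m S') : 𝔽) = -sgn a S' := by
          rw [sgn_insert hmS', if_pos hgt]; ring
        by_cases haS' : a ∈ S'
        · have hmm2 : (mon (insert m (S'.erase a)) : G 𝔽 p q r)
              = e 𝔽 p q r m * mon (S'.erase a) :=
            mon_insert_min (fun b hb => hm b (Finset.mem_of_mem_erase hb))
              (fun h => hmS' (Finset.mem_of_mem_erase h))
          rw [if_pos (Finset.mem_insert_of_mem haS'), hswap, ih, if_pos haS',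
            Finset.erase_insert_of_ne ham.symm, hmm2, hsgn, mul_smul_comm, ← neg_smul,
            neg_mul]
        · have haS : a ∉ insert m S' := by
            intro h
            rcases Finset.mem_insert.mp h with rfl | h
            · exact ham rfl
            · exact haS' h
          have hcomm : insert a (insert m S') = insert m (insert a S') := Finset.insert_comm a m S'
          have hmm2 : (mon (insert m (insert a S')) : G 𝔽 p q r)
              = e 𝔽 p q r m * mon (insert a S') :=
            mon_insert_min (fun b hb => by
              rcases Finset.mem_insert.mp hb with rfl | hb
              · exact hgt
              · exact hm b hb) (by
              intro h
              rcases Finset.mem_insert.mp h with h | h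
              · exact ham h.symm
              · exact hmS' h)
          rw [if_neg haS, hswap, ih, if_neg haS', hsgn, hcomm, hmm2, mul_smul_comm, ← neg_smul]

theorem e_mul_mon_comm (a : Fin (p+q+r)) (S : Finset (Fin (p+q+r))) :
    e 𝔽 p q r a * mon S = ((-1 : 𝔽) ^ (S.erase a).card) • (mon S * e 𝔽 p q r a) := by
  induction S using Finset.induction_on_min with
  | empty => simp
  | insert m S' hm ih =>
      have hmS' : m ∉ S' := fun h => lt_irrefl m (hm m h)
      have hmon : mon (insert m S') = e 𝔽 p q r m * mon S' := mon_insert_min hm hmS'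
      rcases eq_or_ne a m with rfl | ham
      · have h1 : (insert a S').erase a = S' := Finset.erase_insert hmS'
        have h2 : S'.erase a = S' := Finset.erase_eq_of_notMem hmS'
        have ihm := ih
        rw [h2] at ihm
        have hrev : mon S' * e 𝔽 p q r a = ((-1 : 𝔽) ^ S'.card) • (e 𝔽 p q r a * mon S') := by
          rw [ihm, smul_smul, ← pow_add, ← two_mul, pow_mul]
          simp
        rw [h1, hmon]
        calc e 𝔽 p q r a * (e 𝔽 p q r a * mon S')
            = algebraMap 𝔽 _ (w 𝔽 p q r a) * mon S' := by rw [← mul_assoc, e_sq]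
          _ = mon S' * algebraMap 𝔽 _ (w 𝔽 p q r a) := Algebra.commutes _ _
          _ = mon S' * (e 𝔽 p q r a * e 𝔽 p q r a) := by rw [e_sq]
          _ = (mon S' * e 𝔽 p q r a) * e 𝔽 p q r a := by rw [mul_assoc]
          _ = ((-1 : 𝔽) ^ S'.card) • ((e 𝔽 p q r a * mon S') * e 𝔽 p q r a) := by
              rw [hrev, smul_mul_assoc]
      · have h1 : (insert m S').erase a = insert m (S'.erase a) :=
          Finset.erase_insert_of_ne ham.symm
        have hcard : (insert m (S'.erase a)).card = (S'.erase a).card + 1 :=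
          Finset.card_insert_of_notMem (fun h => hmS' (Finset.mem_of_mem_erase h))
        rw [hmon, ← mul_assoc, e_mul_e_of_ne ham, neg_mul, mul_assoc, ih, h1, hcard,
          mul_smul_comm, pow_succ, ← mul_assoc, ← hmon, ← neg_smul]
        congr 1
        ring
end Aux2
section Aux3
open CliffordAlgebra Finset

variable {𝔽 : Type*} [RCLike 𝔽] {p q r : ℕ}

/-- The representation module: functions on subsets. -/
abbrev Mo (𝔽 : Type*) (p q r : ℕ) := Finset (Fin (p+q+r)) → 𝔽

/-- Sign `(-1)^{[a < b]}`. -/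
def eps (a b : Fin (p+q+r)) : 𝔽 := if a < b then -1 else 1

theorem eps_mul_self (a b : Fin (p+q+r)) : (eps a b : 𝔽) * eps a b = 1 := by
  rw [eps]; split <;> ring

theorem eps_anti {a b : Fin (p+q+r)} (hab : a ≠ b) : (eps a b : 𝔽) = -eps b a := by
  rw [eps, eps]
  rcases hab.lt_or_gt with h | h
  · rw [if_pos h, if_neg (asymm h)]
  · rw [if_neg (asymm h), if_pos h]; ring_nf

theorem sgn_erase_of_mem {a b : Fin (p+q+r)} {S : Finset (Fin (p+q+r))}
    (hab : a ≠ b) (ha : a ∈ S) : (sgn b (S.erase a) : 𝔽) = eps a b * sgn b S := by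
  have h := sgn_insert (𝔽 := 𝔽) (a := b) (b := a) (S := S.erase a) (Finset.notMem_erase a S)
  rw [Finset.insert_erase ha] at h
  rw [h, eps, ← mul_assoc]
  split <;> ring

theorem sgn_insert' {a b : Fin (p+q+r)} {S : Finset (Fin (p+q+r))}
    (ha : a ∉ S) : (sgn b (insert a S) : 𝔽) = eps a b * sgn b S := by
  rw [sgn_insert ha, eps]

/-- The basic operator entry. -/
def gop (𝔽 : Type*) [RCLike 𝔽] (p q r : ℕ) (a : Fin (p+q+r)) (S : Finset (Fin (p+q+r)))
    (x : Mo 𝔽 p q r) : 𝔽 :=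
  if a ∈ S then sgn a (S.erase a) * x (S.erase a)
  else w 𝔽 p q r a * (sgn a S * x (insert a S))

theorem gop_add (a : Fin (p+q+r)) (S : Finset (Fin (p+q+r))) (x y : Mo 𝔽 p q r) :
    gop 𝔽 p q r a S (x + y) = gop 𝔽 p q r a S x + gop 𝔽 p q r a S y := by
  rw [gop, gop, gop]; split <;> · simp only [Pi.add_apply]; ring

theorem gop_smul (a : Fin (p+q+r)) (S : Finset (Fin (p+q+r))) (c : 𝔽) (x : Mo 𝔽 p q r) :
    gop 𝔽 p q r a S (c • x) = c * gop 𝔽 p q r a S x := by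
  rw [gop, gop]; split <;> · simp only [Pi.smul_apply, smul_eq_mul]; ring

/-- The operator by which the Clifford algebra acts on `Mo`. -/
def fop (𝔽 : Type*) [RCLike 𝔽] (p q r : ℕ) :
    (Fin (p+q+r) → 𝔽) →ₗ[𝔽] Mo 𝔽 p q r →ₗ[𝔽] Mo 𝔽 p q r :=
  LinearMap.mk₂ 𝔽 (fun v x S => ∑ a, v a * gop 𝔽 p q r a S x)
    (fun v v' x => funext fun S => by
      simp only [Pi.add_apply, add_mul, Finset.sum_add_distrib])
    (fun c v x => funext fun S => by
      simp only [Pi.smul_apply, smul_eq_mul, Finset.mul_sum, mul_assoc])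
    (fun v x y => funext fun S => by
      simp only [gop_add, mul_add, Finset.sum_add_distrib, Pi.add_apply])
    (fun c v x => funext fun S => by
      simp only [gop_smul, Pi.smul_apply, smul_eq_mul, Finset.mul_sum]
      exact Finset.sum_congr rfl fun a _ => by ring)

theorem fop_apply (v : Fin (p+q+r) → 𝔽) (x : Mo 𝔽 p q r) (S : Finset (Fin (p+q+r))) :
    fop 𝔽 p q r v x S = ∑ a, v a * gop 𝔽 p q r a S x := rfl

/-- The pair-interaction coefficient. -/
def KK (𝔽 : Type*) [RCLike 𝔽] (p q r : ℕ) (x : Mo 𝔽 p q r) (S : Finset (Fin (p+q+r)))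
    (a b : Fin (p+q+r)) : 𝔽 :=
  if a ∈ S then sgn a (S.erase a) * gop 𝔽 p q r b (S.erase a) x
  else w 𝔽 p q r a * (sgn a S * gop 𝔽 p q r b (insert a S) x)

theorem KK_diag (x : Mo 𝔽 p q r) (S : Finset (Fin (p+q+r))) (a : Fin (p+q+r)) :
    KK 𝔽 p q r x S a a = w 𝔽 p q r a * x S := by
  by_cases haS : a ∈ S
  · rw [KK, if_pos haS, gop, if_neg (Finset.notMem_erase a S), Finset.insert_erase haS]
    linear_combination (w 𝔽 p q r a * x S) * sgn_mul_self (𝔽 := 𝔽) a (S.erase a)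
  · rw [KK, if_neg haS, gop, if_pos (Finset.mem_insert_self a S), Finset.erase_insert haS]
    linear_combination (w 𝔽 p q r a * x S) * sgn_mul_self (𝔽 := 𝔽) a S

theorem KK_mixed (x : Mo 𝔽 p q r) (S : Finset (Fin (p+q+r))) {a b : Fin (p+q+r)}
    (hab : a ≠ b) (haS : a ∈ S) (hbS : b ∉ S) :
    KK 𝔽 p q r x S a b + KK 𝔽 p q r x S b a = 0 := by
  have hbSa : b ∉ S.erase a := fun h => hbS (Finset.mem_of_mem_erase h)
  have habS : a ∈ insert b S := Finset.mem_insert_of_mem haS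
  rw [KK, if_pos haS, gop, if_neg hbSa, KK, if_neg hbS, gop, if_pos habS,
    Finset.erase_insert_of_ne hab.symm, sgn_erase_of_mem hab haS,
    sgn_insert' (a := b) (fun h => hbS (Finset.mem_of_mem_erase h))]
  simp only [sgn_erase]
  linear_combination ((sgn a S : 𝔽) * sgn b S * w 𝔽 p q r b *
    x (insert b (S.erase a))) * eps_anti (𝔽 := 𝔽) hab

theorem KK_symm (x : Mo 𝔽 p q r) (S : Finset (Fin (p+q+r))) {a b : Fin (p+q+r)}
    (hab : a ≠ b) : KK 𝔽 p q r x S a b + KK 𝔽 p q r x S b a = 0 := by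
  by_cases haS : a ∈ S <;> by_cases hbS : b ∈ S
  · have hbSa : b ∈ S.erase a := Finset.mem_erase.mpr ⟨hab.symm, hbS⟩
    have haSb : a ∈ S.erase b := Finset.mem_erase.mpr ⟨hab, haS⟩
    rw [KK, if_pos haS, gop, if_pos hbSa, KK, if_pos hbS, gop, if_pos haSb]
    simp only [sgn_erase]
    rw [Finset.erase_right_comm (a := a) (b := b), sgn_erase_of_mem hab haS,
      sgn_erase_of_mem hab.symm hbS]
    linear_combination ((sgn a S : 𝔽) * sgn b S * x ((S.erase b).erase a)) * eps_anti (𝔽 := 𝔽) hab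
  · exact KK_mixed x S hab haS hbS
  · rw [add_comm]; exact KK_mixed x S hab.symm hbS haS
  · have hbSa : b ∉ insert a S := by
      intro h; rcases Finset.mem_insert.mp h with h | h
      · exact hab h.symm
      · exact hbS h
    have haSb : a ∉ insert b S := by
      intro h; rcases Finset.mem_insert.mp h with h | h
      · exact hab h
      · exact haS h
    rw [KK, if_neg haS, gop, if_neg hbSa, KK, if_neg hbS, gop, if_neg haSb,
      sgn_insert' haS, sgn_insert' hbS, Finset.insert_comm b a S]
    linear_combination ((sgn a S : 𝔽) * sgn b S * w 𝔽 p q r a * w 𝔽 p q r b *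
      x (insert a (insert b S))) * eps_anti (𝔽 := 𝔽) hab

theorem fop_fop (v : Fin (p+q+r) → 𝔽) (x : Mo 𝔽 p q r) :
    fop 𝔽 p q r v (fop 𝔽 p q r v x) = Q 𝔽 p q r v • x := by
  funext S
  have hK : ∀ a, gop 𝔽 p q r a S (fop 𝔽 p q r v x) = ∑ b, v b * KK 𝔽 p q r x S a b := by
    intro a
    by_cases haS : a ∈ S
    · rw [gop, if_pos haS, fop_apply, Finset.mul_sum]
      exact Finset.sum_congr rfl fun b _ => by rw [KK, if_pos haS]; ring
    · rw [gop, if_neg haS, fop_apply, Finset.mul_sum, Finset.mul_sum]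
      exact Finset.sum_congr rfl fun b _ => by rw [KK, if_neg haS]; ring
  have lhs : fop 𝔽 p q r v (fop 𝔽 p q r v x) S
      = ∑ a, ∑ b, v a * (v b * KK 𝔽 p q r x S a b) := by
    rw [fop_apply]
    exact Finset.sum_congr rfl fun a _ => by rw [hK a, Finset.mul_sum]
  set F : Fin (p+q+r) → Fin (p+q+r) → 𝔽 := fun a b => v a * (v b * KK 𝔽 p q r x S a b) with hF
  have hswap : ∑ a, ∑ b, F a b = ∑ a, ∑ b, F b a := by rw [Finset.sum_comm]
  have key2 : (2:𝔽) * (∑ a, ∑ b, F a b) = 2 * ∑ a, v a * v a * (w 𝔽 p q r a * x S) := by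
    calc (2:𝔽) * (∑ a, ∑ b, F a b) = (∑ a, ∑ b, F a b) + (∑ a, ∑ b, F a b) := two_mul _
      _ = (∑ a, ∑ b, F a b) + (∑ a, ∑ b, F b a) := by rw [← hswap]
      _ = ∑ a, ((∑ b, F a b) + (∑ b, F b a)) := Finset.sum_add_distrib.symm
      _ = ∑ a, ∑ b, (F a b + F b a) :=
          Finset.sum_congr rfl fun a _ => Finset.sum_add_distrib.symm
      _ = ∑ a, 2 * (v a * v a * (w 𝔽 p q r a * x S)) := by
          refine Finset.sum_congr rfl fun a _ => ?_
          rw [Finset.sum_eq_single a]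
          · simp only [hF]
            linear_combination (2 * (v a * v a)) * KK_diag x S a
          · intro b _ hba
            simp only [hF]
            linear_combination (v a * v b) * KK_symm x S (Ne.symm hba : a ≠ b)
          · intro h; exact absurd (Finset.mem_univ a) h
      _ = 2 * ∑ a, v a * v a * (w 𝔽 p q r a * x S) := (Finset.mul_sum _ _ _).symm
  have key := mul_left_cancel₀ (by norm_num : (2:𝔽) ≠ 0) key2
  rw [lhs, key, Pi.smul_apply, smul_eq_mul, Q_apply, Finset.sum_mul]
  exact Finset.sum_congr rfl fun a _ => by ring

end Aux3
section Aux4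
open CliffordAlgebra Finset

variable {𝔽 : Type*} [RCLike 𝔽] {p q r : ℕ}

/-- Coordinate map obtained by folding the action on `Mo` starting at `δ_∅`. -/
def coord (𝔽 : Type*) [RCLike 𝔽] (p q r : ℕ) : G 𝔽 p q r →ₗ[𝔽] Mo 𝔽 p q r :=
  CliffordAlgebra.foldr (Q 𝔽 p q r) (fop 𝔽 p q r) (fop_fop) (Pi.single ∅ 1)

theorem fop_single {m : Fin (p+q+r)} {S' : Finset (Fin (p+q+r))}
    (hm : ∀ b ∈ S', m < b) (hmS' : m ∉ S') :
    fop 𝔽 p q r (Pi.single m 1) (Pi.single S' (1:𝔽)) = Pi.single (insert m S') 1 := by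
  funext T
  rw [fop_apply, Finset.sum_eq_single m]
  · rw [Pi.single_eq_same, one_mul, gop]
    by_cases hmT : m ∈ T
    · rw [if_pos hmT]
      by_cases hTS : T = insert m S'
      · subst hTS
        rw [Finset.erase_insert hmS', Pi.single_eq_same, Pi.single_eq_same, mul_one]
        exact sgn_eq_one (fun b hb => not_lt.mpr (hm b hb).le)
      · have h1 : T.erase m ≠ S' := fun h => hTS (by rw [← h, Finset.insert_erase hmT])
        rw [Pi.single_eq_of_ne h1, Pi.single_eq_of_ne hTS, mul_zero]
    · rw [if_neg hmT]
      have h1 : insert m T ≠ S' := fun h => hmS' (h ▸ Finset.mem_insert_self m T)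
      have h2 : T ≠ insert m S' := fun h => hmT (h ▸ Finset.mem_insert_self m S')
      rw [Pi.single_eq_of_ne h1, Pi.single_eq_of_ne h2, mul_zero, mul_zero]
  · intro b _ hbm
    rw [Pi.single_eq_of_ne hbm, zero_mul]
  · intro h; exact absurd (Finset.mem_univ m) h

theorem coord_mon (S : Finset (Fin (p+q+r))) :
    coord 𝔽 p q r (mon S) = Pi.single S 1 := by
  induction S using Finset.induction_on_min with
  | empty => rw [mon_empty, coord, CliffordAlgebra.foldr_one]
  | insert m S' hm ih =>
      have hmS' : m ∉ S' := fun h => lt_irrefl m (hm m h)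
      rw [mon_insert_min hm hmS', coord, e, CliffordAlgebra.foldr_mul,
        CliffordAlgebra.foldr_ι]
      rw [coord] at ih
      rw [ih, fop_single hm hmS']

theorem mon_li : LinearIndependent 𝔽 (fun S : Finset (Fin (p+q+r)) => (mon S : G 𝔽 p q r)) := by
  have h : LinearIndependent 𝔽
      (fun S : Finset (Fin (p+q+r)) => (Pi.single S 1 : Mo 𝔽 p q r)) := by
    have := (Pi.basisFun 𝔽 (Finset (Fin (p+q+r)))).linearIndependent
    convert this using 1
    funext S
    simp [Pi.basisFun_apply]
  have hcomp : (fun S : Finset (Fin (p+q+r)) => (Pi.single S 1 : Mo 𝔽 p q r))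
      = (coord 𝔽 p q r) ∘ (fun S => mon S) := by
    funext S; exact (coord_mon S).symm
  rw [hcomp] at h
  exact LinearIndependent.of_comp _ h

theorem e_mul_mem_span {x : G 𝔽 p q r} (a : Fin (p+q+r))
    (hx : x ∈ Submodule.span 𝔽 (Set.range (fun S => (mon S : G 𝔽 p q r)))) :
    e 𝔽 p q r a * x ∈ Submodule.span 𝔽 (Set.range (fun S => (mon S : G 𝔽 p q r))) := by
  induction hx using Submodule.span_induction with
  | mem y hy =>
      obtain ⟨S, rfl⟩ := hy
      rw [e_mul_mon]
      split
      · exact Submodule.smul_mem _ _ (Submodule.subset_span ⟨_, rfl⟩)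
      · exact Submodule.smul_mem _ _ (Submodule.subset_span ⟨_, rfl⟩)
  | zero => rw [mul_zero]; exact Submodule.zero_mem _
  | add y z _ _ hy hz => rw [mul_add]; exact Submodule.add_mem _ hy hz
  | smul c y _ hy => rw [mul_smul_comm]; exact Submodule.smul_mem _ _ hy

theorem mon_mul_mem_span (S : Finset (Fin (p+q+r))) {y : G 𝔽 p q r}
    (hy : y ∈ Submodule.span 𝔽 (Set.range (fun S => (mon S : G 𝔽 p q r)))) :
    mon S * y ∈ Submodule.span 𝔽 (Set.range (fun S => (mon S : G 𝔽 p q r))) := by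
  induction S using Finset.induction_on_min with
  | empty => rw [mon_empty, one_mul]; exact hy
  | insert m S' hm ih =>
      have hmS' : m ∉ S' := fun h => lt_irrefl m (hm m h)
      rw [mon_insert_min hm hmS', mul_assoc]
      exact e_mul_mem_span m ih

theorem mon_span (x : G 𝔽 p q r) :
    x ∈ Submodule.span 𝔽 (Set.range (fun S => (mon S : G 𝔽 p q r))) := by
  induction x using CliffordAlgebra.induction with
  | algebraMap c =>
      rw [Algebra.algebraMap_eq_smul_one]
      exact Submodule.smul_mem _ _ (Submodule.subset_span ⟨∅, mon_empty⟩)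
  | ι v =>
      have hv : (v : Fin (p+q+r) → 𝔽) = ∑ a, Pi.single a (v a) :=
        (Finset.univ_sum_single v).symm
      rw [hv, map_sum]
      refine Submodule.sum_mem _ fun a _ => ?_
      have : Pi.single a (v a) = v a • (Pi.single a 1 : Fin (p+q+r) → 𝔽) := by
        rw [← Pi.single_smul, smul_eq_mul, mul_one]
      rw [this, map_smul]
      exact Submodule.smul_mem _ _ (Submodule.subset_span ⟨{a}, mon_singleton a⟩)
  | mul x y hx hy =>
      induction hx using Submodule.span_induction with
      | mem z hz =>
          obtain ⟨S, rfl⟩ := hz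
          exact mon_mul_mem_span S hy
      | zero => rw [zero_mul]; exact Submodule.zero_mem _
      | add u z _ _ hu hz => rw [add_mul]; exact Submodule.add_mem _ hu hz
      | smul c u _ hu => rw [smul_mul_assoc]; exact Submodule.smul_mem _ _ hu
  | add x y hx hy => exact Submodule.add_mem _ hx hy

/-- The monomial basis of the Clifford algebra. -/
def monBasis (𝔽 : Type*) [RCLike 𝔽] (p q r : ℕ) :
    Module.Basis (Finset (Fin (p+q+r))) 𝔽 (G 𝔽 p q r) :=
  Module.Basis.mk mon_li (fun x _ => mon_span x)

@[simp] theorem monBasis_apply (S : Finset (Fin (p+q+r))) :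
    monBasis 𝔽 p q r S = mon S := Module.Basis.mk_apply _ _ _

theorem repr_eq_coord (x : G 𝔽 p q r) (S : Finset (Fin (p+q+r))) :
    (monBasis 𝔽 p q r).repr x S = coord 𝔽 p q r x S := by
  have hx : x = ∑ T, (monBasis 𝔽 p q r).repr x T • mon T := by
    conv_lhs => rw [← (monBasis 𝔽 p q r).sum_repr x]
    exact Finset.sum_congr rfl fun T _ => by rw [monBasis_apply]
  calc (monBasis 𝔽 p q r).repr x S
      = coord 𝔽 p q r (∑ T, (monBasis 𝔽 p q r).repr x T • mon T) S := ?_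
    _ = coord 𝔽 p q r x S := by rw [← hx]
  rw [map_sum, Finset.sum_apply, Finset.sum_eq_single S]
  · rw [map_smul, Pi.smul_apply, coord_mon, Pi.single_eq_same, smul_eq_mul, mul_one]
  · intro T _ hTS
    rw [map_smul, Pi.smul_apply, coord_mon, Pi.single_eq_of_ne (Ne.symm hTS), smul_zero]
  · intro h; exact absurd (Finset.mem_univ S) h

theorem mem_span_mon_iff {𝒮 : Set (Finset (Fin (p+q+r)))} {x : G 𝔽 p q r} :
    x ∈ Submodule.span 𝔽 ((fun S => (mon S : G 𝔽 p q r)) '' 𝒮)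
      ↔ ∀ S, S ∉ 𝒮 → coord 𝔽 p q r x S = 0 := by
  have himg : (fun S => (mon S : G 𝔽 p q r)) '' 𝒮 = (monBasis 𝔽 p q r) '' 𝒮 := by
    apply Set.image_congr
    intro S _
    rw [monBasis_apply]
  rw [himg, Module.Basis.mem_span_image]
  constructor
  · intro h S hS
    rw [← repr_eq_coord]
    by_contra hne
    exact hS (h (Finsupp.mem_support_iff.mpr hne))
  · intro h S hS
    by_contra hne
    have := h S hne
    rw [← repr_eq_coord] at this
    exact Finsupp.mem_support_iff.mp hS this

theorem sum_coord_mon (x : G 𝔽 p q r) :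
    ∑ S, coord 𝔽 p q r x S • mon S = x := by
  have := (monBasis 𝔽 p q r).sum_repr x
  calc ∑ S, coord 𝔽 p q r x S • mon S
      = ∑ S, (monBasis 𝔽 p q r).repr x S • monBasis 𝔽 p q r S := by
        refine Finset.sum_congr rfl fun S _ => ?_
        rw [repr_eq_coord, monBasis_apply]
    _ = x := this

end Aux4
section Aux5
open CliffordAlgebra Finset

variable {𝔽 : Type*} [RCLike 𝔽] {p q r : ℕ}

theorem w_null {a : Fin (p+q+r)} (h : p + q ≤ (a:ℕ)) : w 𝔽 p q r a = 0 := by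
  rw [w, if_neg (by omega), if_neg (by omega)]

theorem w_ne_zero {a : Fin (p+q+r)} (h : (a:ℕ) < p + q) : w 𝔽 p q r a ≠ 0 := by
  rw [w]
  by_cases h1 : (a:ℕ) < p
  · rw [if_pos h1]; exact one_ne_zero
  · rw [if_neg h1, if_pos h]; exact neg_ne_zero.mpr one_ne_zero

theorem mon_e_comm_of_null_even {S : Finset (Fin (p+q+r))}
    (hnull : ∀ a ∈ S, p + q ≤ (a:ℕ)) (heven : Even S.card) (a : Fin (p+q+r)) :
    e 𝔽 p q r a * mon S = mon S * e 𝔽 p q r a := by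
  by_cases haS : a ∈ S
  · have h0 : e 𝔽 p q r a * mon S = 0 := by
      rw [e_mul_mon, if_pos haS, w_null (hnull a haS), mul_zero, zero_smul]
    have h1 := e_mul_mon_comm (𝔽 := 𝔽) a S
    rw [h0] at h1
    have h2 : (mon S * e 𝔽 p q r a : G 𝔽 p q r) = 0 := by
      have hne : ((-1 : 𝔽) ^ (S.erase a).card) ≠ 0 :=
        pow_ne_zero _ (neg_ne_zero.mpr one_ne_zero)
      exact (smul_eq_zero.mp h1.symm).resolve_left hne
    rw [h0, h2]
  · rw [e_mul_mon_comm, Finset.erase_eq_of_notMem haS, Even.neg_one_pow heven, one_smul]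

theorem mon_e_comm_univ (hodd : Odd (p+q+r)) (a : Fin (p+q+r)) :
    e 𝔽 p q r a * mon Finset.univ = mon Finset.univ * e 𝔽 p q r a := by
  rw [e_mul_mon_comm, Finset.card_erase_of_mem (Finset.mem_univ a)]
  have hcu : (Finset.univ : Finset (Fin (p+q+r))).card = p+q+r := by
    rw [Finset.card_univ, Fintype.card_fin]
  obtain ⟨k, hk⟩ := hodd
  have he : Even (p+q+r-1) := ⟨k, by omega⟩
  rw [hcu, Even.neg_one_pow he, one_smul]

theorem central_of_e_comm {z : G 𝔽 p q r}
    (hz : ∀ a, e 𝔽 p q r a * z = z * e 𝔽 p q r a) (x : G 𝔽 p q r) :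
    z * x = x * z := by
  induction x using CliffordAlgebra.induction with
  | algebraMap c => rw [← Algebra.commutes]
  | ι v =>
      have hv : (v : Fin (p+q+r) → 𝔽) = ∑ a, Pi.single a (v a) :=
        (Finset.univ_sum_single v).symm
      rw [hv, map_sum, Finset.mul_sum, Finset.sum_mul]
      refine Finset.sum_congr rfl fun a _ => ?_
      have hsm : (CliffordAlgebra.ι (Q 𝔽 p q r)) (Pi.single a (v a))
          = v a • e 𝔽 p q r a := by
        have : Pi.single a (v a) = v a • (Pi.single a 1 : Fin (p+q+r) → 𝔽) := by
          rw [← Pi.single_smul, smul_eq_mul, mul_one]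
        rw [this, map_smul, e]
      rw [hsm, mul_smul_comm, smul_mul_assoc, hz a]
  | mul x y hx hy =>
      rw [← mul_assoc, hx, mul_assoc, hy, mul_assoc]
  | add x y hx hy => rw [mul_add, add_mul, hx, hy]

theorem coord_comm_term (a : Fin (p+q+r)) (U T : Finset (Fin (p+q+r))) :
    coord 𝔽 p q r (e 𝔽 p q r a * mon U - mon U * e 𝔽 p q r a) T =
      (1 - (-1:𝔽) ^ (U.erase a).card) *
        (if a ∈ U then (sgn a U * w 𝔽 p q r a) * (if T = U.erase a then 1 else 0)
         else sgn a U * (if T = insert a U then 1 else 0)) := by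
  have hpow : ((-1:𝔽) ^ (U.erase a).card) * ((-1:𝔽) ^ (U.erase a).card) = 1 := by
    rw [← pow_add, ← two_mul, pow_mul]; simp
  have h1 : (mon U * e 𝔽 p q r a : G 𝔽 p q r)
      = ((-1:𝔽) ^ (U.erase a).card) • (e 𝔽 p q r a * mon U) := by
    rw [e_mul_mon_comm, smul_smul, hpow, one_smul]
  rw [map_sub, h1, map_smul]
  by_cases haU : a ∈ U
  · rw [e_mul_mon, if_pos haU, if_pos haU, map_smul, coord_mon]
    simp only [Pi.sub_apply, Pi.smul_apply, smul_eq_mul, Pi.single_apply]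
    ring
  · rw [e_mul_mon, if_neg haU, if_neg haU, map_smul, coord_mon]
    simp only [Pi.sub_apply, Pi.smul_apply, smul_eq_mul, Pi.single_apply]
    ring

theorem coord_comm_expand {z : G 𝔽 p q r}
    (hz : ∀ b, e 𝔽 p q r b * z = z * e 𝔽 p q r b) (a : Fin (p+q+r))
    (T : Finset (Fin (p+q+r))) :
    ∑ U, coord 𝔽 p q r z U *
      coord 𝔽 p q r (e 𝔽 p q r a * mon U - mon U * e 𝔽 p q r a) T = 0 := by
  have hexp : e 𝔽 p q r a * z - z * e 𝔽 p q r a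
      = ∑ U, coord 𝔽 p q r z U • (e 𝔽 p q r a * mon U - mon U * e 𝔽 p q r a) := by
    conv_lhs => rw [← sum_coord_mon (𝔽 := 𝔽) z]
    rw [Finset.mul_sum, Finset.sum_mul, ← Finset.sum_sub_distrib]
    exact Finset.sum_congr rfl fun U _ => by
      rw [mul_smul_comm, smul_mul_assoc, smul_sub]
  have h0 : e 𝔽 p q r a * z - z * e 𝔽 p q r a = 0 := by rw [hz a, sub_self]
  have := congrFun (congrArg (coord 𝔽 p q r) (h0.symm.trans hexp)) T
  rw [map_zero] at this
  rw [map_sum] at this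
  simp only [Pi.zero_apply, Finset.sum_apply, map_smul, Pi.smul_apply, smul_eq_mul] at this
  exact this.symm

theorem coord_zero_of_comm_odd {z : G 𝔽 p q r}
    (hz : ∀ b, e 𝔽 p q r b * z = z * e 𝔽 p q r b) {S : Finset (Fin (p+q+r))}
    (hodd : Odd S.card) {a : Fin (p+q+r)} (haS : a ∉ S) :
    coord 𝔽 p q r z S = 0 := by
  have key := coord_comm_expand hz a (insert a S)
  rw [Finset.sum_eq_single S] at key
  · rw [coord_comm_term, if_neg haS, if_pos rfl,
      Finset.erase_eq_of_notMem haS, Odd.neg_one_pow hodd] at key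
    -- key : c_S * ((1 - -1) * (sgn a S * 1)) = 0
    have h1 : sgn a S * coord 𝔽 p q r z S = 0 := by
      have h2 : (2:𝔽) * (sgn a S * coord 𝔽 p q r z S) = 0 := by linear_combination key
      exact (mul_eq_zero.mp h2).resolve_left (by norm_num)
    linear_combination (sgn a S) * h1 - (coord 𝔽 p q r z S) * (sgn_mul_self (𝔽 := 𝔽) a S)
  · intro U _ hUS
    rw [coord_comm_term]
    by_cases haU : a ∈ U
    · have hne : insert a S ≠ U.erase a := fun h =>
        Finset.notMem_erase a U (by rw [← h]; exact Finset.mem_insert_self a S)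
      rw [if_pos haU, if_neg hne]
      ring
    · have hne : insert a S ≠ insert a U := by
        intro h
        apply hUS
        have h2 := congrArg (fun X => Finset.erase X a) h
        simp only [Finset.erase_insert haS, Finset.erase_insert haU] at h2
        exact h2.symm
      rw [if_neg haU, if_neg hne]
      ring
  · intro h; exact absurd (Finset.mem_univ S) h

theorem coord_zero_of_comm_even {z : G 𝔽 p q r}
    (hz : ∀ b, e 𝔽 p q r b * z = z * e 𝔽 p q r b) {S : Finset (Fin (p+q+r))}
    (heven : Even S.card) {a : Fin (p+q+r)} (haS : a ∈ S) (hwa : w 𝔽 p q r a ≠ 0) :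
    coord 𝔽 p q r z S = 0 := by
  have key := coord_comm_expand hz a (S.erase a)
  have hodd' : Odd (S.erase a).card := by
    rw [Finset.card_erase_of_mem haS]
    rcases heven with ⟨k, hk⟩
    have : S.card ≠ 0 := fun h => by simp [Finset.card_eq_zero.mp h] at haS
    refine ⟨k - 1, by omega⟩
  rw [Finset.sum_eq_single S] at key
  · rw [coord_comm_term, if_pos haS, if_pos rfl, Odd.neg_one_pow hodd'] at key
    have h1 : sgn a S * (w 𝔽 p q r a * coord 𝔽 p q r z S) = 0 := by
      have h2 : (2:𝔽) * (sgn a S * (w 𝔽 p q r a * coord 𝔽 p q r z S)) = 0 := by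
        linear_combination key
      exact (mul_eq_zero.mp h2).resolve_left (by norm_num)
    have h3 : w 𝔽 p q r a * coord 𝔽 p q r z S = 0 := by
      linear_combination (sgn a S) * h1 - (w 𝔽 p q r a * coord 𝔽 p q r z S) *
        (sgn_mul_self (𝔽 := 𝔽) a S)
    exact (mul_eq_zero.mp h3).resolve_left hwa
  · intro U _ hUS
    rw [coord_comm_term]
    by_cases haU : a ∈ U
    · have hne : S.erase a ≠ U.erase a := by
        intro h
        apply hUS
        have h2 := congrArg (fun X => insert a X) h
        simp only [Finset.insert_erase haS, Finset.insert_erase haU] at h2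
        exact h2.symm
      rw [if_pos haU, if_neg hne]
      ring
    · have hne : S.erase a ≠ insert a U := fun h =>
        Finset.notMem_erase a S (by rw [h]; exact Finset.mem_insert_self a U)
      rw [if_neg haU, if_neg hne]
      ring
  · intro h; exact absurd (Finset.mem_univ S) h

end Aux5
section Aux6
open CliffordAlgebra Finset

variable {𝔽 : Type*} [RCLike 𝔽] {p q r : ℕ}

/-- Index sets of central monomials. -/
def CSet (p q r : ℕ) : Set (Finset (Fin (p+q+r))) :=
  {S | ((∀ a ∈ S, p + q ≤ (a:ℕ)) ∧ Even S.card) ∨ (Odd (p+q+r) ∧ S = Finset.univ)}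

/-- Index sets of even null monomials. -/
def NeSet (p q r : ℕ) : Set (Finset (Fin (p+q+r))) :=
  {S | (∀ a ∈ S, p + q ≤ (a:ℕ)) ∧ Even S.card}

/-- Index sets of null monomials. -/
def NSet (p q r : ℕ) : Set (Finset (Fin (p+q+r))) :=
  {S | ∀ a ∈ S, p + q ≤ (a:ℕ)}

theorem central_iff (z : G 𝔽 p q r) :
    (∀ x, z * x = x * z) ↔
      z ∈ Submodule.span 𝔽 ((fun S => (mon S : G 𝔽 p q r)) '' CSet p q r) := by
  constructor
  · intro h
    rw [mem_span_mon_iff]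
    intro S hS
    have hz : ∀ b, e 𝔽 p q r b * z = z * e 𝔽 p q r b := fun b => (h (e 𝔽 p q r b)).symm
    rcases Nat.even_or_odd S.card with heven | hodd
    · have hnn : ¬ (∀ a ∈ S, p + q ≤ (a:ℕ)) := fun hall => hS (Or.inl ⟨hall, heven⟩)
      push_neg at hnn
      obtain ⟨a, haS, ha⟩ := hnn
      exact coord_zero_of_comm_even hz heven haS (w_ne_zero (by omega))
    · have hSuniv : S ≠ Finset.univ := by
        intro hS'
        apply hS
        right
        refine ⟨?_, hS'⟩
        rwa [hS', Finset.card_univ, Fintype.card_fin] at hodd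
      obtain ⟨a, haS⟩ : ∃ a, a ∉ S := by
        by_contra hc
        push_neg at hc
        exact hSuniv (Finset.eq_univ_iff_forall.mpr hc)
      exact coord_zero_of_comm_odd hz hodd haS
  · intro hmem x
    induction hmem using Submodule.span_induction with
    | mem y hy =>
        obtain ⟨S, hS, rfl⟩ := hy
        rcases hS with ⟨hnull, heven⟩ | ⟨hodd, rfl⟩
        · exact central_of_e_comm (fun a => mon_e_comm_of_null_even hnull heven a) x
        · exact central_of_e_comm (fun a => mon_e_comm_univ hodd a) x
    | zero => rw [zero_mul, mul_zero]
    | add u v _ _ hu hv => rw [add_mul, mul_add, hu, hv]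
    | smul c u _ hu => rw [smul_mul_assoc, mul_smul_comm, hu]

theorem involute_mon (S : Finset (Fin (p+q+r))) :
    CliffordAlgebra.involute (mon S : G 𝔽 p q r) = ((-1:𝔽) ^ S.card) • mon S := by
  induction S using Finset.induction_on_min with
  | empty => simp
  | insert m S' hm ih =>
      have hmS' : m ∉ S' := fun h => lt_irrefl m (hm m h)
      rw [mon_insert_min hm hmS', map_mul, ih, e, CliffordAlgebra.involute_ι, ← e,
        Finset.card_insert_of_notMem hmS']
      rw [neg_mul, mul_smul_comm, ← neg_smul, ← mon_insert_min hm hmS', pow_succ]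
      congr 1
      ring

theorem coord_involute (x : G 𝔽 p q r) (S : Finset (Fin (p+q+r))) :
    coord 𝔽 p q r (CliffordAlgebra.involute x) S = (-1:𝔽)^S.card * coord 𝔽 p q r x S := by
  conv_lhs => rw [← sum_coord_mon (𝔽 := 𝔽) x]
  rw [map_sum, map_sum, Finset.sum_apply, Finset.sum_eq_single S]
  · rw [map_smul, involute_mon, map_smul, map_smul, coord_mon]
    simp only [Pi.smul_apply, smul_eq_mul, Pi.single_eq_same]
    ring
  · intro U _ hUS
    rw [map_smul, involute_mon, map_smul, map_smul, coord_mon]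
    simp only [Pi.smul_apply, smul_eq_mul]
    rw [Pi.single_eq_of_ne (Ne.symm hUS)]
    ring
  · intro h; exact absurd (Finset.mem_univ S) h

theorem eq_of_coord {x y : G 𝔽 p q r} (h : ∀ S, coord 𝔽 p q r x S = coord 𝔽 p q r y S) :
    x = y := by
  apply (monBasis 𝔽 p q r).repr.injective
  ext S
  rw [repr_eq_coord, repr_eq_coord, h]

theorem mem_Geven_iff {x : G 𝔽 p q r} :
    x ∈ Geven 𝔽 p q r ↔ ∀ S, Odd S.card → coord 𝔽 p q r x S = 0 := by
  constructor
  · intro hx S hS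
    have hx' : CliffordAlgebra.involute x = x := hx
    have h2 := coord_involute x S
    rw [hx', Odd.neg_one_pow hS] at h2
    have h3 : (2:𝔽) * coord 𝔽 p q r x S = 0 := by linear_combination h2
    exact (mul_eq_zero.mp h3).resolve_left (by norm_num)
  · intro h
    show CliffordAlgebra.involute x = x
    apply eq_of_coord
    intro S
    rw [coord_involute]
    rcases Nat.even_or_odd S.card with he | ho
    · rw [Even.neg_one_pow he, one_mul]
    · rw [h S ho, mul_zero]

theorem mon_mem_Geven {S : Finset (Fin (p+q+r))} (h : Even S.card) :
    (mon S : G 𝔽 p q r) ∈ Geven 𝔽 p q r := by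
  show CliffordAlgebra.involute _ = _
  rw [involute_mon, Even.neg_one_pow h, one_smul]

theorem mon_mem_Λr (S : Finset (Fin (p+q+r))) :
    (∀ a ∈ S, p + q ≤ (a:ℕ)) → (mon S : G 𝔽 p q r) ∈ Λr 𝔽 p q r := by
  induction S using Finset.induction_on_min with
  | empty => intro _; rw [mon_empty]; exact one_mem _
  | insert m S' hm ih =>
      intro h
      have hmS' : m ∉ S' := fun hc => lt_irrefl m (hm m hc)
      rw [mon_insert_min hm hmS']
      refine mul_mem (Algebra.subset_adjoin ⟨m, h m (Finset.mem_insert_self m S'), rfl⟩)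
        (ih (fun a ha => h a (Finset.mem_insert_of_mem ha)))

theorem e_mul_mem_spanN {a : Fin (p+q+r)} (hnull : p + q ≤ (a:ℕ)) {x : G 𝔽 p q r}
    (hx : x ∈ Submodule.span 𝔽 ((fun S => (mon S : G 𝔽 p q r)) '' NSet p q r)) :
    e 𝔽 p q r a * x ∈ Submodule.span 𝔽 ((fun S => (mon S : G 𝔽 p q r)) '' NSet p q r) := by
  induction hx using Submodule.span_induction with
  | mem y hy =>
      obtain ⟨S, hS, rfl⟩ := hy
      rw [e_mul_mon]
      split
      · refine Submodule.smul_mem _ _ (Submodule.subset_span ⟨S.erase a, ?_, rfl⟩)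
        exact fun b hb => hS b (Finset.mem_of_mem_erase hb)
      · refine Submodule.smul_mem _ _ (Submodule.subset_span ⟨insert a S, ?_, rfl⟩)
        intro b hb
        rcases Finset.mem_insert.mp hb with rfl | hb
        · exact hnull
        · exact hS b hb
  | zero => rw [mul_zero]; exact Submodule.zero_mem _
  | add y z _ _ hy hz => rw [mul_add]; exact Submodule.add_mem _ hy hz
  | smul c y _ hy => rw [mul_smul_comm]; exact Submodule.smul_mem _ _ hy

theorem mon_mul_mem_spanN (S : Finset (Fin (p+q+r))) :
    (∀ a ∈ S, p + q ≤ (a:ℕ)) → ∀ y : G 𝔽 p q r,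
    y ∈ Submodule.span 𝔽 ((fun S => (mon S : G 𝔽 p q r)) '' NSet p q r) →
    mon S * y ∈ Submodule.span 𝔽 ((fun S => (mon S : G 𝔽 p q r)) '' NSet p q r) := by
  induction S using Finset.induction_on_min with
  | empty => intro _ y hy; rw [mon_empty, one_mul]; exact hy
  | insert m S' hm ih =>
      intro h y hy
      have hmS' : m ∉ S' := fun hc => lt_irrefl m (hm m hc)
      rw [mon_insert_min hm hmS', mul_assoc]
      exact e_mul_mem_spanN (h m (Finset.mem_insert_self m S'))
        (ih (fun a ha => h a (Finset.mem_insert_of_mem ha)) y hy)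

theorem Λrs_eq :
    Λrs 𝔽 p q r = Submodule.span 𝔽 ((fun S => (mon S : G 𝔽 p q r)) '' NSet p q r) := by
  apply le_antisymm
  · have hone : (1 : G 𝔽 p q r) ∈
        Submodule.span 𝔽 ((fun S => (mon S : G 𝔽 p q r)) '' NSet p q r) := by
      refine Submodule.subset_span ⟨∅, fun a ha => absurd ha (Finset.notMem_empty a), mon_empty⟩
    have hmul : ∀ x y : G 𝔽 p q r,
        x ∈ Submodule.span 𝔽 ((fun S => (mon S : G 𝔽 p q r)) '' NSet p q r) →
        y ∈ Submodule.span 𝔽 ((fun S => (mon S : G 𝔽 p q r)) '' NSet p q r) →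
        x * y ∈ Submodule.span 𝔽 ((fun S => (mon S : G 𝔽 p q r)) '' NSet p q r) := by
      intro x y hx hy
      induction hx using Submodule.span_induction with
      | mem z hz =>
          obtain ⟨S, hS, rfl⟩ := hz
          exact mon_mul_mem_spanN S hS y hy
      | zero => rw [zero_mul]; exact Submodule.zero_mem _
      | add u z _ _ hu hz => rw [add_mul]; exact Submodule.add_mem _ hu hz
      | smul c u _ hu => rw [smul_mul_assoc]; exact Submodule.smul_mem _ _ hu
    have hle : Λr 𝔽 p q r ≤ Submodule.toSubalgebra _ hone hmul := by
      apply Algebra.adjoin_le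
      rintro x ⟨a, hnull, rfl⟩
      show e 𝔽 p q r a ∈ Submodule.span 𝔽 _
      refine Submodule.subset_span ⟨{a}, ?_, mon_singleton a⟩
      intro b hb
      rw [Finset.mem_singleton] at hb
      subst hb
      exact hnull
    exact fun x hx => hle hx
  · rw [Submodule.span_le]
    rintro x ⟨S, hS, rfl⟩
    exact mon_mem_Λr S hS

theorem Λr0_eq :
    Λr0 𝔽 p q r = Submodule.span 𝔽 ((fun S => (mon S : G 𝔽 p q r)) '' NeSet p q r) := by
  apply le_antisymm
  · intro x hx
    obtain ⟨hx1, hx2⟩ := hx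
    rw [mem_span_mon_iff]
    intro S hS
    by_cases hnull : ∀ a ∈ S, p + q ≤ (a:ℕ)
    · have hodd : Odd S.card := by
        rcases Nat.even_or_odd S.card with he | ho
        · exact absurd (⟨hnull, he⟩ : S ∈ NeSet p q r) hS
        · exact ho
      exact mem_Geven_iff.mp hx2 S hodd
    · have hx1' : x ∈ Λrs 𝔽 p q r := hx1
      rw [Λrs_eq, mem_span_mon_iff] at hx1'
      exact hx1' S hnull
  · rw [Submodule.span_le]
    rintro x ⟨S, ⟨hnull, heven⟩, rfl⟩
    constructor
    · show mon S ∈ Λrs 𝔽 p q r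
      rw [Λrs_eq]
      exact Submodule.subset_span ⟨S, hnull, rfl⟩
    · exact mon_mem_Geven heven

theorem eTop_eq_mon : eTop 𝔽 p q r = mon Finset.univ := by
  rw [eTop, mon, Fin.sort_univ, List.ofFn_eq_map]

theorem Gn_eq :
    Gn 𝔽 p q r = Submodule.span 𝔽 ((fun S => (mon S : G 𝔽 p q r)) '' {Finset.univ}) := by
  rw [Gn, eTop_eq_mon, Set.image_singleton]

theorem sup_eq (hodd : Odd (p+q+r)) :
    Λr0 𝔽 p q r ⊔ Gn 𝔽 p q r
      = Submodule.span 𝔽 ((fun S => (mon S : G 𝔽 p q r)) '' CSet p q r) := by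
  rw [Λr0_eq, Gn_eq, ← Submodule.span_union, ← Set.image_union]
  have : NeSet p q r ∪ {Finset.univ} = CSet p q r := by
    ext S
    simp only [Set.mem_union, Set.mem_singleton_iff, NeSet, CSet, Set.mem_setOf_eq]
    constructor
    · rintro (h | rfl)
      · exact Or.inl h
      · exact Or.inr ⟨hodd, rfl⟩
    · rintro (h | ⟨_, rfl⟩)
      · exact Or.inl h
      · exact Or.inr rfl
  rw [this]

theorem CSet_even (heven : Even (p+q+r)) : CSet p q r = NeSet p q r := by
  ext S
  simp only [CSet, NeSet, Set.mem_setOf_eq]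
  constructor
  · rintro (h | ⟨hodd, rfl⟩)
    · exact h
    · exact absurd heven (Nat.not_even_iff_odd.mpr hodd)
  · exact Or.inl

end Aux6
/-- The kernel of the adjoint representation equals `(Λ_r^{(0)} + 𝒢^n)^×` if `n`
is odd, and `Λ_r^{(0)×}` if `n` is even. -/
theorem stmt4 (hn : 1 ≤ p + q + r) :
    (Odd (p + q + r) →
      {T : G 𝔽 p q r | IsUnit T ∧ ∀ U : G 𝔽 p q r, T * U * Ring.inverse T = U}
        = ux 𝔽 p q r ↑(Λr0 𝔽 p q r ⊔ Gn 𝔽 p q r)) ∧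
    (Even (p + q + r) →
      {T : G 𝔽 p q r | IsUnit T ∧ ∀ U : G 𝔽 p q r, T * U * Ring.inverse T = U}
        = ux 𝔽 p q r ↑(Λr0 𝔽 p q r)) := by
  have main : ∀ (W : Submodule 𝔽 (G 𝔽 p q r)),
      W = Submodule.span 𝔽 ((fun S => (mon S : G 𝔽 p q r)) '' CSet p q r) →
      {T : G 𝔽 p q r | IsUnit T ∧ ∀ U : G 𝔽 p q r, T * U * Ring.inverse T = U}
        = ux 𝔽 p q r ↑W := by
    intro W hW
    ext T
    simp only [Set.mem_setOf_eq, ux, Set.mem_sep_iff]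
    constructor
    · rintro ⟨hu, hcomm⟩
      refine ⟨?_, hu⟩
      have hc : ∀ x, T * x = x * T := by
        intro x
        have h1 : T * x = ((T * x) * Ring.inverse T) * T := by
          rw [mul_assoc, Ring.inverse_mul_cancel _ hu, mul_one]
        rw [h1, hcomm x]
      show T ∈ W
      rw [hW]
      exact (central_iff T).mp hc
    · rintro ⟨hmem, hu⟩
      refine ⟨hu, fun U => ?_⟩
      have hmem' : T ∈ W := hmem
      rw [hW] at hmem'
      have hc := (central_iff T).mpr hmem'
      rw [hc U, mul_assoc, Ring.mul_inverse_cancel _ hu, mul_one]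
  constructor
  · intro hodd
    exact main _ (sup_eq hodd)
  · intro heven
    refine main _ ?_
    rw [Λr0_eq, CSet_even heven]

end ClGA
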